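/- Let g be the Lie algebra A_{4,1} and let r : g* → g be the map defined by r(ε1) = e4, r(ε2) = −e3, r(ε3) = e2, r(ε4) = −e1. Then a linear endomorphism n of g makes (r, n) an r-n structure on g if and only if there exist real numbers n1, n2, n3, n4 such that n(e1) = n1·e1, n(e2) = −n2·e1 + n3·e2, n(e3) = n4·e1 + n3·e3, and n(e4) = n4·e2 + n2·e3 + n1·e4. -/

import Mathlib

noncomputable section

open Module

variable {g : Type*} [LieRing g] [LieAlgebra ℝ g]

/-- The coadjoint operator: `(coad X α) Y = -α ⁅X, Y⁆`. -/
def coad (X : g) : Module.Dual ℝ g →ₗ[ℝ] Module.Dual ℝ g :=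
  -(LieAlgebra.ad ℝ g X).dualMap

/-- A linear map `r : g* → g` is skew-symmetric if `α (r β) = -β (r α)`. -/
def IsSkew (r : Module.Dual ℝ g →ₗ[ℝ] g) : Prop :=
  ∀ α β : Module.Dual ℝ g, α (r β) = -β (r α)

/-- The Sklyanin bracket on `g*` defined by `r`. -/
def sklyanin (r : Module.Dual ℝ g →ₗ[ℝ] g) (α β : Module.Dual ℝ g) : Module.Dual ℝ g :=
  coad (r α) β - coad (r β) α

/-- `r` is a solution of the classical Yang-Baxter equation. -/
def IsCYBE (r : Module.Dual ℝ g →ₗ[ℝ] g) : Prop :=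
  ∀ α β : Module.Dual ℝ g, r (sklyanin r α β) = ⁅r α, r β⁆

/-- `n : g → g` is a Nijenhuis operator. -/
def IsNijenhuis (n : g →ₗ[ℝ] g) : Prop :=
  ∀ X Y : g, ⁅n X, n Y⁆ - n ⁅n X, Y⁆ - n ⁅X, n Y⁆ + n (n ⁅X, Y⁆) = 0

/-- `(r, n)` is an r-n structure on `g`. -/
def IsRN (r : Module.Dual ℝ g →ₗ[ℝ] g) (n : g →ₗ[ℝ] g) : Prop :=
  IsSkew r ∧ IsCYBE r ∧ IsNijenhuis n ∧
    (∀ α : Module.Dual ℝ g, n (r α) = r (n.dualMap α)) ∧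
    ∀ α β : Module.Dual ℝ g,
      coad (r α) (n.dualMap β) - coad (r β) (n.dualMap α)
        - n.dualMap (coad (r α) β) + n.dualMap (coad (r β) α) = 0

/-- The Nijenhuis concomitant of two endomorphisms. -/
def nijConcomitant (n' n : g →ₗ[ℝ] g) (X Y : g) : g :=
  ⁅n' X, n Y⁆ + ⁅n X, n' Y⁆ - n' ⁅n X, Y⁆ - n' ⁅X, n Y⁆ - n ⁅n' X, Y⁆ - n ⁅X, n' Y⁆
    + n' (n ⁅X, Y⁆) + n (n' ⁅X, Y⁆)

/-- The underlying space of the Lie algebra `A_{4,1}`: `ℝ⁴`. -/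
def A41 : Type := Fin 4 → ℝ

instance : AddCommGroup A41 := inferInstanceAs (AddCommGroup (Fin 4 → ℝ))
instance : Module ℝ A41 := inferInstanceAs (Module ℝ (Fin 4 → ℝ))

namespace A41

@[simp] theorem add_apply (x y : A41) (i : Fin 4) : (x + y) i = x i + y i := rfl
@[simp] theorem smul_apply (c : ℝ) (x : A41) (i : Fin 4) : (c • x) i = c * x i := rfl
@[simp] theorem neg_apply (x : A41) (i : Fin 4) : (-x) i = -(x i) := rfl
@[simp] theorem sub_apply (x y : A41) (i : Fin 4) : (x - y) i = x i - y i := rfl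
@[simp] theorem zero_apply (i : Fin 4) : (0 : A41) i = 0 := rfl

/-- The bracket of `A_{4,1}`: `[e2, e4] = e1`, `[e3, e4] = e2`. -/
def br (x y : A41) : A41 := fun i =>
  if i = 0 then x 1 * y 3 - x 3 * y 1
  else if i = 1 then x 2 * y 3 - x 3 * y 2
  else 0

@[simp] theorem br_apply (x y : A41) (i : Fin 4) :
    br x y i = if i = 0 then x 1 * y 3 - x 3 * y 1
      else if i = 1 then x 2 * y 3 - x 3 * y 2 else 0 := rfl

instance : LieRing A41 where
  bracket := br
  add_lie x y z := by funext i; simp [br]; split_ifs <;> ring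
  lie_add x y z := by funext i; simp [br]; split_ifs <;> ring
  lie_self x := by funext i; simp [br]; split_ifs <;> ring
  leibniz_lie x y z := by funext i; simp [br]; split_ifs <;> ring

instance : LieAlgebra ℝ A41 where
  lie_smul c x y := by funext i; show br x (c • y) i = (c • br x y) i; simp [br]; split_ifs <;> ring

/-- Basis vectors `e1, e2, e3, e4` (zero-indexed). -/
def e (i : Fin 4) : A41 := fun j => if j = i then 1 else 0

/-- Dual basis `ε1, ε2, ε3, ε4` (zero-indexed). -/
def eps (i : Fin 4) : Module.Dual ℝ A41 where
  toFun x := x i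
  map_add' _ _ := rfl
  map_smul' _ _ := rfl

-- Auxiliary lemmas
@[simp] theorem e_apply (j i : Fin 4) : e j i = if i = j then 1 else 0 := rfl
@[simp] theorem eps_apply (i : Fin 4) (x : A41) : eps i x = x i := rfl
theorem lie_def (x y : A41) : ⁅x, y⁆ = br x y := rfl

theorem expand (x : A41) : x = x 0 • e 0 + x 1 • e 1 + x 2 • e 2 + x 3 • e 3 := by
  funext i; fin_cases i <;> simp [e]

theorem dual_decomp (α : Module.Dual ℝ A41) :
    α = α (e 0) • eps 0 + α (e 1) • eps 1 + α (e 2) • eps 2 + α (e 3) • eps 3 := by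
  ext x
  conv_lhs => rw [expand x]
  simp
  ring

theorem coad_apply (X : A41) (γ : Module.Dual ℝ A41) (Y : A41) :
    coad X γ Y = -γ ⁅X, Y⁆ := by
  simp [coad, LieAlgebra.ad_apply]

/-- Build an element of `A41` from its coordinates. -/
def mk (f : Fin 4 → ℝ) : A41 := f
@[simp] theorem mk_apply (f : Fin 4 → ℝ) (i : Fin 4) : mk f i = f i := rfl

end A41

set_option maxHeartbeats 2000000 in
open A41 in
theorem a41_isRN_iff
    (r : Module.Dual ℝ A41 →ₗ[ℝ] A41)
    (h1 : r (eps 0) = e 3) (h2 : r (eps 1) = -e 2)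
    (h3 : r (eps 2) = e 1) (h4 : r (eps 3) = -e 0)
    (n : A41 →ₗ[ℝ] A41) :
    IsRN r n ↔ ∃ n1 n2 n3 n4 : ℝ,
      n (e 0) = n1 • e 0 ∧
      n (e 1) = -n2 • e 0 + n3 • e 1 ∧
      n (e 2) = n4 • e 0 + n3 • e 2 ∧
      n (e 3) = n4 • e 1 + n2 • e 2 + n1 • e 3 := by
  have key : ∀ {x y : A41}, x = y → ∀ i, x i = y i := by rintro x y rfl i; rfl
  have hr : ∀ γ : Module.Dual ℝ A41, r γ = mk fun i : Fin 4 =>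
      if i = 0 then -γ (e 3) else if i = 1 then γ (e 2)
      else if i = 2 then -γ (e 1) else γ (e 0) := by
    intro γ
    conv_lhs => rw [dual_decomp γ, map_add, map_add, map_add, map_smul, map_smul,
      map_smul, map_smul, h1, h2, h3, h4]
    funext i; fin_cases i <;> simp [e] <;> ring
  constructor
  · rintro ⟨-, -, -, hcomm, hconc⟩
    have c0 := hcomm (eps 0); rw [h1, hr] at c0
    have c1 := hcomm (eps 1); rw [h2, map_neg, hr] at c1
    have c2 := hcomm (eps 2); rw [h3, hr] at c2
    have c3 := hcomm (eps 3); rw [h4, map_neg, hr] at c3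
    have A := key c0 0; have B := key c0 1; have C := key c0 2; have D := key c0 3
    have E := key c1 1; have F := key c1 2; have G := key c1 3
    have H := key c2 2; have I := key c2 3
    have K := key c3 3
    simp [LinearMap.dualMap_apply] at A B C D E F G H I K
    have hb32 : (⁅e 3, e 2⁆ : A41) = -e 1 := by funext i; fin_cases i <;> simp [lie_def, br, e]
    have hb12 : (⁅e 1, e 2⁆ : A41) = 0 := by funext i; fin_cases i <;> simp [lie_def, br, e]
    have hb02 : (⁅(-e 0 : A41), e 2⁆ : A41) = 0 := by
      funext i; fin_cases i <;> simp [lie_def, br, e]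
    have P := LinearMap.congr_fun (hconc (eps 0) (eps 2)) (e 2)
    rw [h1, h3] at P
    simp only [LinearMap.sub_apply, LinearMap.add_apply, LinearMap.zero_apply,
      coad_apply, LinearMap.dualMap_apply, hb32, hb12, map_neg, map_zero] at P
    simp [lie_def, e] at P
    have Q := LinearMap.congr_fun (hconc (eps 0) (eps 3)) (e 2)
    rw [h1, h4] at Q
    simp only [LinearMap.sub_apply, LinearMap.add_apply, LinearMap.zero_apply,
      coad_apply, LinearMap.dualMap_apply, hb32, hb02, map_neg, map_zero] at Q
    simp [lie_def, e] at Q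
    refine ⟨n (e 0) 0, -(n (e 1) 0), n (e 1) 1, n (e 2) 0, ?_, ?_, ?_, ?_⟩ <;>
      (funext i; fin_cases i) <;> simp [e] <;> linarith [A, B, C, D, E, F, G, H, I, K, P, Q]
  · rintro ⟨n1, n2, n3, n4, hn0, hn1, hn2, hn3⟩
    have hnc : ∀ x : A41, n x = mk fun i : Fin 4 =>
        if i = 0 then n1 * x 0 - n2 * x 1 + n4 * x 2
        else if i = 1 then n3 * x 1 + n4 * x 3
        else if i = 2 then n3 * x 2 + n2 * x 3 else n1 * x 3 := by
      intro x
      conv_lhs => rw [expand x, map_add, map_add, map_add, map_smul, map_smul,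
        map_smul, map_smul, hn0, hn1, hn2, hn3]
      funext i; fin_cases i <;> simp [e] <;> ring
    refine ⟨?_, ?_, ?_, ?_, ?_⟩
    · intro α β
      rw [dual_decomp α, dual_decomp β, hr, hr]
      simp
      ring
    · intro α β
      rw [dual_decomp α, dual_decomp β]
      funext i
      simp only [sklyanin, hr, coad_apply, lie_def]
      fin_cases i <;>
        simp [coad_apply, lie_def, br, e, LinearMap.sub_apply, LinearMap.add_apply,
          LinearMap.smul_apply, smul_eq_mul] <;> ring
    · intro X Y
      funext i
      simp only [hnc, lie_def]
      fin_cases i <;> simp [br] <;> ring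
    · intro α
      rw [dual_decomp α]
      funext i
      simp only [hnc, hr, LinearMap.dualMap_apply]
      fin_cases i <;> simp [e] <;> ring
    · intro α β
      rw [dual_decomp α, dual_decomp β]
      ext Y
      simp only [LinearMap.sub_apply, LinearMap.add_apply, LinearMap.zero_apply,
        coad_apply, LinearMap.dualMap_apply, hr, hnc, lie_def]
      simp [br, e, smul_eq_mul]
      ring
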